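/- Let Φ be a finite irreducible root system with simple roots indexed by I, and let K ⊆ I with K ≠ I and K^c = I∖K nonempty. If the lowest coset representative w₀(I)·w₀(K) of w₀W_K equals w₀(J) for some J ⊆ K^c, then K = ∅. -/

import Mathlib

open scoped RealInnerProductSpace

/-- The length of an element of a reflection group with respect to the given simple
reflections: the least number of simple reflections whose product is `w`. -/
noncomputable def coxLen {V : Type*} [NormedAddCommGroup V] [InnerProductSpace ℝ V]
    {I : Type*} (s : I → (V ≃ₗ[ℝ] V)) (w : V ≃ₗ[ℝ] V) : ℕ :=
  sInf {n : ℕ | ∃ l : List I, l.length = n ∧ (l.map s).prod = w}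

/-- Let `Φ` be a finite irreducible crystallographic root system with base `α : I → V`,
simple reflections `s_i`, Weyl group generated by them, and for `J ⊆ I` let `w₀(J)` be
the longest element of the standard parabolic subgroup `W_J`.  If `K ⊆ I` with
`K ≠ I` and the lowest coset representative `w₀(I)·w₀(K)` of `w₀ W_K` equals `w₀(J)`
for some `J ⊆ K^c`, then `K = ∅`. -/
theorem stmt_18 {V : Type*} [NormedAddCommGroup V] [InnerProductSpace ℝ V]
    {I : Type*} [Fintype I]
    (Φ : Set V) (hfin : Φ.Finite) (h0 : (0 : V) ∉ Φ)
    (α : I → V) (hα : ∀ i, α i ∈ Φ) (hind : LinearIndependent ℝ α)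
    (P : Set V) (hPsub : P ⊆ Φ)
    (hpm : ∀ β ∈ Φ, β ∈ P ∨ -β ∈ P) (hdisj : ∀ β ∈ P, -β ∉ P)
    (hpos : ∀ β ∈ P, ∃ c : I → ℝ, (∀ i, 0 ≤ c i) ∧ β = ∑ i, c i • α i)
    (hrefl : ∀ β ∈ Φ, ∀ γ ∈ Φ, γ - (2 * ⟪γ, β⟫ / ⟪β, β⟫) • β ∈ Φ)
    (hcrys : ∀ β ∈ Φ, ∀ γ ∈ Φ, ∃ n : ℤ, 2 * ⟪β, γ⟫ / ⟪γ, γ⟫ = (n : ℝ))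
    (hirr : ¬ ∃ A B : Set V, A.Nonempty ∧ B.Nonempty ∧ A ∪ B = Φ ∧
      ∀ a ∈ A, ∀ b ∈ B, ⟪a, b⟫ = 0)
    -- the simple reflections
    (s : I → (V ≃ₗ[ℝ] V))
    (hs : ∀ i v, s i v = v - (2 * ⟪v, α i⟫ / ⟪α i, α i⟫) • α i)
    -- `w0 J` is the longest element of the standard parabolic subgroup `W_J`
    (w0 : Set I → (V ≃ₗ[ℝ] V))
    (hw0 : ∀ J : Set I, w0 J ∈ Subgroup.closure (s '' J) ∧
      ∀ u ∈ Subgroup.closure (s '' J), coxLen s u ≤ coxLen s (w0 J))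
    (K : Set I) (hKI : K ≠ Set.univ)
    (hco : ∃ J : Set I, J ⊆ Kᶜ ∧ w0 Set.univ * w0 K = w0 J) :
    K = ∅ := by
  classical
  have mulA : ∀ (u v : V ≃ₗ[ℝ] V) (x : V), (u * v) x = u (v x) := fun _ _ _ => rfl
  have oneA : ∀ x : V, (1 : V ≃ₗ[ℝ] V) x = x := fun _ => rfl
  have invA : ∀ (u : V ≃ₗ[ℝ] V) (x : V), u (u⁻¹ x) = x := fun u x => u.apply_symm_apply x
  have uniq : ∀ c d : I → ℝ, ∑ i, c i • α i = ∑ i, d i • α i → c = d := by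
    intro c d h
    have hz : ∑ i, (c i - d i) • α i = 0 := by
      simp only [sub_smul, Finset.sum_sub_distrib, h, sub_self]
    have h2 := Fintype.linearIndependent_iff.mp hind (fun i => c i - d i) hz
    funext i
    have := h2 i
    simp only [sub_eq_zero] at this
    exact this
  have hrepδ : ∀ i : I, α i = ∑ j, (if j = i then (1:ℝ) else 0) • α j := by
    intro i
    simp [ite_smul]
  have hαP : ∀ i, α i ∈ P := by
    intro i
    rcases hpm (α i) (hα i) with h | h
    · exact h
    · exfalso
      obtain ⟨c, hc0, hc⟩ := hpos _ h
      have h2 : α i = ∑ j, (-c j) • α j := by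
        have : α i = -∑ j, c j • α j := by rw [← hc]; simp
        rw [this]; simp [neg_smul]
      have h3 := congrFun (uniq _ _ ((hrepδ i).symm.trans h2)) i
      simp at h3
      have := hc0 i
      linarith
  have hne0 : ∀ i, α i ≠ 0 := fun i h => h0 (h ▸ hα i)
  have hip : ∀ i, ⟪α i, α i⟫ ≠ 0 := fun i h => hne0 i (inner_self_eq_zero.mp h)
  have hss : ∀ i v, s i (s i v) = v := by
    intro i v
    rw [hs i v, hs i, inner_sub_left, real_inner_smul_left]
    have key : 2 * (⟪v, α i⟫ - 2 * ⟪v, α i⟫ / ⟪α i, α i⟫ * ⟪α i, α i⟫) / ⟪α i, α i⟫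
        = -(2 * ⟪v, α i⟫ / ⟪α i, α i⟫) := by
      rw [div_mul_cancel₀ _ (hip i)]
      ring
    rw [key]
    module
  have sorth : ∀ i v w, ⟪s i v, s i w⟫ = ⟪v, w⟫ := by
    intro i v w
    rw [hs i v, hs i w]
    simp only [inner_sub_left, inner_sub_right, real_inner_smul_left, real_inner_smul_right]
    rw [real_inner_comm (α i) w, real_inner_comm (α i) v]
    field_simp [hip i]
    ring
  have negPhi : ∀ v ∈ Φ, -v ∈ Φ := by
    intro v hv
    have hvv : ⟪v, v⟫ ≠ 0 := fun h => h0 (by rwa [inner_self_eq_zero.mp h] at hv)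
    have h1 := hrefl v hv v hv
    rw [mul_div_assoc, div_self hvv, mul_one] at h1
    rwa [show v - (2:ℝ) • v = -v by module] at h1
  have sPhi : ∀ i, ∀ v ∈ Φ, s i v ∈ Φ := fun i v hv => by
    rw [hs]; exact hrefl (α i) (hα i) v hv
  have hs2 : ∀ i, s i * s i = 1 := by
    intro i
    refine LinearEquiv.ext fun v => ?_
    rw [mulA, oneA, hss]
  have hsinv : ∀ i, (s i)⁻¹ = s i := fun i => inv_eq_of_mul_eq_one_right (hs2 i)

  have hrev : ∀ l : List I, ((l.reverse.map s).prod) = ((l.map s).prod)⁻¹ := by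
    intro l
    induction l with
    | nil => simp
    | cons j t ih =>
      simp only [List.reverse_cons, List.map_append, List.prod_append, List.map_cons,
        List.prod_cons, List.map_nil, List.prod_nil, mul_one, ih, mul_inv_rev, hsinv j]
  have hprodΦ : ∀ l : List I, ∀ v ∈ Φ, (l.map s).prod v ∈ Φ := by
    intro l
    induction l with
    | nil => intro v hv; simpa [oneA] using hv
    | cons j t ih =>
      intro v hv
      simp only [List.map_cons, List.prod_cons, mulA]
      exact sPhi j _ (ih v hv)
  have hprodO : ∀ l : List I, ∀ v w : V, ⟪(l.map s).prod v, (l.map s).prod w⟫ = ⟪v, w⟫ := by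
    intro l
    induction l with
    | nil => intro v w; simp [oneA]
    | cons j t ih =>
      intro v w
      simp only [List.map_cons, List.prod_cons, mulA]
      rw [sorth, ih]
  have hword : ∀ S : Set I, ∀ w ∈ Subgroup.closure (s '' S), ∃ l : List I, (l.map s).prod = w := by
    intro S w hw
    induction hw using Subgroup.closure_induction with
    | mem x hx =>
      obtain ⟨i, _, rfl⟩ := hx
      exact ⟨[i], by simp⟩
    | one => exact ⟨[], by simp⟩
    | mul x y hx hy ihx ihy =>
      obtain ⟨lx, hlx⟩ := ihx
      obtain ⟨ly, hly⟩ := ihy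
      exact ⟨lx ++ ly, by simp [List.prod_append, hlx, hly]⟩
    | inv x hx ihx =>
      obtain ⟨l, hl⟩ := ihx
      exact ⟨l.reverse, by rw [hrev, hl]⟩
  have hclosΦ : ∀ (S : Set I) (w : V ≃ₗ[ℝ] V), w ∈ Subgroup.closure (s '' S) →
      ∀ v ∈ Φ, w v ∈ Φ := by
    intro S w hw v hv
    obtain ⟨l, hl⟩ := hword S w hw
    rw [← hl]
    exact hprodΦ l v hv
  have hcoeff : ∀ (S : Set I) (w : V ≃ₗ[ℝ] V), w ∈ Subgroup.closure (s '' S) →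
      ∀ v : V, ∃ c : I → ℝ, (∀ i ∉ S, c i = 0) ∧ w v = v + ∑ i, c i • α i := by
    intro S w hw
    induction hw using Subgroup.closure_induction with
    | mem x hx =>
      intro v
      obtain ⟨i, hiS, rfl⟩ := hx
      refine ⟨fun j => if j = i then -(2 * ⟪v, α i⟫ / ⟪α i, α i⟫) else 0,
        fun j hj => if_neg (by rintro rfl; exact hj hiS), ?_⟩
      · rw [hs i v]
        simp [ite_smul, sub_eq_add_neg]
    | one =>
      intro v
      exact ⟨0, fun i _ => rfl, by simp [oneA]⟩
    | mul x y hx hy ihx ihy =>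
      intro v
      obtain ⟨cy, hys, hy'⟩ := ihy v
      obtain ⟨cx, hxs, hx'⟩ := ihx (y v)
      refine ⟨fun i => cy i + cx i, fun i hi => by show cy i + cx i = 0; rw [hys i hi, hxs i hi, add_zero], ?_⟩
      rw [mulA, hx', hy']
      simp only [add_smul, Finset.sum_add_distrib]
      abel
    | inv x hx ihx =>
      intro v
      obtain ⟨c, hcs, hc⟩ := ihx (x⁻¹ v)
      refine ⟨fun i => -c i, fun i hi => by show -c i = 0; rw [hcs i hi, neg_zero], ?_⟩
      rw [invA] at hc
      have h2 : x⁻¹ v = v - ∑ i, c i • α i := eq_sub_of_add_eq hc.symm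
      rw [h2]
      simp only [neg_smul, Finset.sum_neg_distrib]
      abel
  have lemB : ∀ (S : Set I) (u : V ≃ₗ[ℝ] V), u ∈ Subgroup.closure (s '' S) →
      ∀ β ∈ P, u β ∉ P → ∀ c : I → ℝ, (∀ i, 0 ≤ c i) → β = ∑ i, c i • α i →
      ∀ i ∉ S, c i = 0 := by
    intro S u hu β hβ huβ c hc0 hc i hiS
    have hβΦ : β ∈ Φ := hPsub hβ
    have huβΦ : u β ∈ Φ := hclosΦ S u hu β hβΦ
    have hneg : -u β ∈ P := (hpm _ huβΦ).resolve_left huβ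
    obtain ⟨e, he0, he⟩ := hpos _ hneg
    obtain ⟨f, hfs, hf⟩ := hcoeff S u hu β
    have h1 : ∑ j, (c j + e j) • α j = ∑ j, (-f j) • α j := by
      have hβe : β + (-u β) = -(∑ j, f j • α j) := by rw [hf]; abel
      calc ∑ j, (c j + e j) • α j = β + (-u β) := by
            simp only [add_smul, Finset.sum_add_distrib, ← hc, ← he]
        _ = ∑ j, (-f j) • α j := by
            rw [hβe]
            simp only [neg_smul, Finset.sum_neg_distrib]
    have h2 := congrFun (uniq _ _ h1) i
    have h3 := hfs i hiS
    have := hc0 i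
    have := he0 i
    rw [h3] at h2
    linarith
  have lem1 : ∀ (j : I), ∀ β ∈ P, s j β ∉ P → ∃ c : ℝ, 0 < c ∧ β = c • α j := by
    intro j β hβ hsj
    obtain ⟨c, hc0, hc⟩ := hpos β hβ
    have hβΦ := hPsub hβ
    have hsΦ := sPhi j β hβΦ
    have hneg : -(s j β) ∈ P := (hpm _ hsΦ).resolve_left hsj
    obtain ⟨e, he0, he⟩ := hpos _ hneg
    have hsb : s j β = β - (2 * ⟪β, α j⟫ / ⟪α j, α j⟫) • α j := hs j β
    have h1 : ∑ i, (c i + e i) • α i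
        = ∑ i, (if i = j then 2 * ⟪β, α j⟫ / ⟪α j, α j⟫ else 0) • α i := by
      have hβe : β + (-(s j β)) = (2 * ⟪β, α j⟫ / ⟪α j, α j⟫) • α j := by rw [hsb]; abel
      calc ∑ i, (c i + e i) • α i = β + (-(s j β)) := by
            simp only [add_smul, Finset.sum_add_distrib, ← hc, ← he]
        _ = ∑ i, (if i = j then 2 * ⟪β, α j⟫ / ⟪α j, α j⟫ else 0) • α i := by
            rw [hβe]; simp [ite_smul]
    have h2 := uniq _ _ h1
    have hcc : ∀ i, i ≠ j → c i = 0 := by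
      intro i hij
      have h4 := congrFun h2 i
      simp only [if_neg hij] at h4
      have := hc0 i
      have := he0 i
      linarith
    have hform : β = c j • α j := by
      rw [hc]
      rw [Finset.sum_eq_single j (fun i _ hij => by rw [hcc i hij, zero_smul])
        (fun h => absurd (Finset.mem_univ j) h)]
    have hcj : c j ≠ 0 := by
      intro h
      rw [h, zero_smul] at hform
      exact h0 (hform ▸ hβΦ)
    exact ⟨c j, lt_of_le_of_ne (hc0 j) (Ne.symm hcj), hform⟩
  have hconj : ∀ (u : V ≃ₗ[ℝ] V), (∀ v w, ⟪u v, u w⟫ = ⟪v, w⟫) →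
      ∀ (i j : I) (c : ℝ), c ≠ 0 → u (α i) = c • α j → u * s i = s j * u := by
    intro u huo i j c hc hua
    refine LinearEquiv.ext fun v => ?_
    rw [mulA, mulA, hs i v, hs j (u v)]
    rw [map_sub, map_smul, hua, smul_smul]
    have h1 : ⟪v, α i⟫ = c * ⟪u v, α j⟫ := by
      rw [← huo v (α i), hua, real_inner_smul_right]
    have h2 : ⟪α i, α i⟫ = c * (c * ⟪α j, α j⟫) := by
      rw [← huo (α i) (α i), hua, real_inner_smul_left, real_inner_smul_right]
    have h3 : 2 * ⟪v, α i⟫ / ⟪α i, α i⟫ * c = 2 * ⟪u v, α j⟫ / ⟪α j, α j⟫ := by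
      rw [h1, h2]
      field_simp
    rw [h3]
  have lemA : ∀ (l : List I) (i : I), ((l.map s).prod) (α i) ∉ P →
      ∃ l' : List I, l'.length + 1 = l.length ∧ (l'.map s).prod = (l.map s).prod * s i := by
    intro l
    induction l with
    | nil =>
      intro i hi
      exact absurd (by simpa [oneA] using hαP i) hi
    | cons j t ih =>
      intro i hi
      simp only [List.map_cons, List.prod_cons, mulA] at hi ⊢
      by_cases hu : ((t.map s).prod) (α i) ∈ P
      · obtain ⟨c, hc, huα⟩ := lem1 j _ hu hi
        have hc' := hconj ((t.map s).prod) (hprodO t) i j c (ne_of_gt hc) huα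
        refine ⟨t, by simp, ?_⟩
        rw [mul_assoc, hc', ← mul_assoc, hs2 j, one_mul]
      · obtain ⟨t', ht1, ht2⟩ := ih i hu
        refine ⟨j :: t', by simp only [List.length_cons]; omega, ?_⟩
        simp only [List.map_cons, List.prod_cons, ht2, mul_assoc]

  -- coxLen basics
  have hcox_le : ∀ (w : V ≃ₗ[ℝ] V) (l : List I), (l.map s).prod = w → coxLen s w ≤ l.length :=
    fun w l h => Nat.sInf_le ⟨l, rfl, h⟩
  have hcox_mem : ∀ (w : V ≃ₗ[ℝ] V), (∃ l : List I, (l.map s).prod = w) →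
      ∃ l : List I, l.length = coxLen s w ∧ (l.map s).prod = w := by
    intro w ⟨l, hl⟩
    exact Nat.sInf_mem (⟨l.length, l, rfl, hl⟩ :
      {n : ℕ | ∃ l : List I, l.length = n ∧ (l.map s).prod = w}.Nonempty)
  have hstep : ∀ (w : V ≃ₗ[ℝ] V) (l : List I) (i : I), (l.map s).prod = w →
      w (α i) ∈ P → coxLen s w < coxLen s (w * s i) := by
    intro w l i hl hP
    have hword' : ∃ l' : List I, (l'.map s).prod = w * s i :=
      ⟨l ++ [i], by simp [List.prod_append, hl]⟩
    obtain ⟨l₀, hlen₀, hp₀⟩ := hcox_mem (w * s i) hword'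
    have hneg : ((l₀.map s).prod) (α i) ∉ P := by
      rw [hp₀, mulA]
      have : s i (α i) = -α i := by
        rw [hs]
        rw [mul_div_assoc, div_self (hip i), mul_one]
        module
      rw [this, map_neg]
      exact hdisj _ hP
    obtain ⟨l'', hlen'', hp''⟩ := lemA l₀ i hneg
    have hw'' : (l''.map s).prod = w := by
      rw [hp'', hp₀, mul_assoc, hs2 i, mul_one]
    have := hcox_le w l'' hw''
    omega
  have maxneg : ∀ (S : Set I), ∀ i ∈ S, (w0 S) (α i) ∉ P := by
    intro S i hiS hP
    obtain ⟨l, hl⟩ := hword S (w0 S) (hw0 S).1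
    have h1 := hstep (w0 S) l i hl hP
    have h2 := (hw0 S).2 (w0 S * s i)
      (mul_mem (hw0 S).1 (Subgroup.subset_closure ⟨i, hiS, rfl⟩))
    omega
  have negcomb : ∀ (w : V ≃ₗ[ℝ] V), (∀ v ∈ Φ, w v ∈ Φ) → ∀ β ∈ P, ∀ c : I → ℝ,
      (∀ i, 0 ≤ c i) → β = ∑ i, c i • α i → (∀ i, c i ≠ 0 → w (α i) ∉ P) → w β ∉ P := by
    intro w hwΦ β hβ c hc0 hc hneg hwβ
    have key : ∀ i : I, ∃ e : I → ℝ, (∀ j, 0 ≤ e j) ∧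
        c i • w (α i) = -(c i • ∑ j, e j • α j) := by
      intro i
      by_cases hci : c i = 0
      · exact ⟨0, fun j => le_refl 0, by simp [hci]⟩
      · have h1 : -w (α i) ∈ P := (hpm _ (hwΦ _ (hα i))).resolve_left (hneg i hci)
        obtain ⟨e, he0, hee⟩ := hpos _ h1
        refine ⟨e, he0, ?_⟩
        rw [← hee]
        simp
    choose E hE0 hE2 using key
    have hrep : w β = ∑ j, (-(∑ i, c i * E i j)) • α j := by
      calc w β = ∑ i, c i • w (α i) := by rw [hc, map_sum]; simp only [map_smul]
        _ = ∑ i, -(c i • ∑ j, E i j • α j) := Finset.sum_congr rfl (fun i _ => hE2 i)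
        _ = -∑ i, ∑ j, (c i * E i j) • α j := by
            simp only [Finset.smul_sum, smul_smul, Finset.sum_neg_distrib]
        _ = -∑ j, ∑ i, (c i * E i j) • α j := by rw [Finset.sum_comm]
        _ = ∑ j, (-(∑ i, c i * E i j)) • α j := by
            simp only [neg_smul, Finset.sum_neg_distrib, Finset.sum_smul]
    obtain ⟨d, hd0, hd⟩ := hpos _ hwβ
    have h3 := uniq _ _ (hd.symm.trans hrep)
    have hdz : ∀ j, d j = 0 := by
      intro j
      have h4 := congrFun h3 j
      have h5 : 0 ≤ ∑ i, c i * E i j :=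
        Finset.sum_nonneg fun i _ => mul_nonneg (hc0 i) (hE0 i j)
      have := hd0 j
      linarith
    have hβ0 : w β = 0 := by
      rw [hd]
      simp [hdz]
    have : β = 0 := by
      have := congrArg w.symm hβ0
      rwa [w.symm_apply_apply, map_zero] at this
    exact h0 (this ▸ hPsub hβ)
  -- longest element sends positives to negatives
  have hW : ∀ β ∈ P, (w0 Set.univ) β ∉ P := by
    intro β hβ
    obtain ⟨c, hc0, hc⟩ := hpos β hβ
    exact negcomb (w0 Set.univ) (hclosΦ Set.univ (w0 Set.univ) (hw0 Set.univ).1) β hβ c hc0 hc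
      (fun i _ => maxneg Set.univ i (Set.mem_univ i))
  obtain ⟨J, hJK, hJeq⟩ := hco
  have hMW : w0 Set.univ = w0 J * (w0 K)⁻¹ := by
    rw [← hJeq]
    group
  -- the positive roots supported in S
  set PK : Set V := {β | β ∈ P ∧ ∀ c : I → ℝ, β = ∑ i, c i • α i → ∀ i ∉ K, c i = 0}
    with hPKdef
  set PJ : Set V := {β | β ∈ P ∧ ∀ c : I → ℝ, β = ∑ i, c i • α i → ∀ i ∉ J, c i = 0}
    with hPJdef
  have hBmem : ∀ (S : Set I) (u : V ≃ₗ[ℝ] V), u ∈ Subgroup.closure (s '' S) →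
      ∀ β ∈ P, u β ∉ P → ∀ c : I → ℝ, β = ∑ i, c i • α i → ∀ i ∉ S, c i = 0 := by
    intro S u hu β hβ huβ c hc i hiS
    obtain ⟨c₀, hc₀0, hc₀⟩ := hpos β hβ
    have hcc : c = c₀ := uniq _ _ (by rw [← hc, ← hc₀])
    rw [hcc]
    exact lemB S u hu β hβ huβ c₀ hc₀0 hc₀ i hiS
  have hdich : ∀ β ∈ P, β ∉ PK → (w0 K)⁻¹ β ∈ PJ := by
    intro β hβ hβK
    by_cases h1 : (w0 K)⁻¹ β ∈ P
    · refine ⟨h1, ?_⟩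
      intro c hc i hiJ
      have hnot : (w0 J) ((w0 K)⁻¹ β) ∉ P := by
        have : (w0 J) ((w0 K)⁻¹ β) = (w0 Set.univ) β := by rw [hMW, mulA]
        rw [this]
        exact hW β hβ
      exact hBmem J (w0 J) (hw0 J).1 _ h1 hnot c hc i hiJ
    · exfalso
      apply hβK
      refine ⟨hβ, ?_⟩
      intro c hc i hiK
      exact hBmem K ((w0 K)⁻¹) (inv_mem (hw0 K).1) β hβ h1 c hc i hiK
  have hPKP : PK ⊆ P := fun β h => h.1
  have hPJP : PJ ⊆ P := fun β h => h.1
  have hfinP : P.Finite := hfin.subset hPsub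
  have hdisjJK : ∀ β, β ∈ PJ → β ∉ PK := by
    intro β hJ hK
    obtain ⟨c, hc0, hc⟩ := hpos β hJ.1
    have hz : ∀ i, c i = 0 := by
      intro i
      by_cases hiK : i ∈ K
      · exact hJ.2 c hc i (fun hiJ => hJK hiJ hiK)
      · exact hK.2 c hc i hiK
    have : β = 0 := by rw [hc]; simp [hz]
    exact h0 (this ▸ hPsub hJ.1)
  have hPJsub : PJ ⊆ P \ PK := fun β h => ⟨h.1, hdisjJK β h⟩
  have hcard : (P \ PK).ncard ≤ PJ.ncard := by
    refine Set.ncard_le_ncard_of_injOn (fun β => (w0 K)⁻¹ β)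
      (fun β hβ => hdich β hβ.1 hβ.2) ?_ (hfinP.subset hPJP)
    intro x _ y _ hxy
    exact ((w0 K)⁻¹).injective hxy
  have hsplitEq : PJ = P \ PK :=
    Set.eq_of_subset_of_ncard_le hPJsub hcard (hfinP.subset Set.diff_subset)
  have hsplit : ∀ β ∈ P, β ∈ PK ∨ β ∈ PJ := by
    intro β hβ
    by_cases h : β ∈ PK
    · exact Or.inl h
    · exact Or.inr (by rw [hsplitEq]; exact ⟨hβ, h⟩)
  -- key orthogonality
  have hkey : ∀ a ∈ PK, ∀ b ∈ PJ, ⟪a, b⟫ = (0:ℝ) := by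
    intro a ha b hb
    by_contra hab
    have haP := ha.1
    have hbP := hb.1
    have haΦ := hPsub haP
    have hbΦ := hPsub hbP
    have ha0 : a ≠ 0 := fun h => h0 (h ▸ haΦ)
    have hb0 : b ≠ 0 := fun h => h0 (h ▸ hbΦ)
    have haa : ⟪a, a⟫ ≠ 0 := fun h => ha0 (inner_self_eq_zero.mp h)
    have hba : ⟪b, a⟫ ≠ 0 := fun h => hab (by rwa [real_inner_comm] at h)
    set t : ℝ := 2 * ⟪b, a⟫ / ⟪a, a⟫ with ht
    have ht0 : t ≠ 0 := div_ne_zero (mul_ne_zero two_ne_zero hba) haa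
    have hδΦ : b - t • a ∈ Φ := hrefl a haΦ b hbΦ
    obtain ⟨ca, hca0, hca⟩ := hpos a haP
    obtain ⟨cb, hcb0, hcb⟩ := hpos b hbP
    obtain ⟨i₀, hi₀⟩ : ∃ i₀, cb i₀ ≠ 0 := by
      by_contra h
      push_neg at h
      exact hb0 (by rw [hcb]; simp [h])
    have hi₀J : i₀ ∈ J := by
      by_contra h
      exact hi₀ (hb.2 cb hcb i₀ h)
    have hi₀K : i₀ ∉ K := fun h => hJK hi₀J h
    obtain ⟨k₁, hk₁⟩ : ∃ k₁, ca k₁ ≠ 0 := by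
      by_contra h
      push_neg at h
      exact ha0 (by rw [hca]; simp [h])
    have hk₁K : k₁ ∈ K := by
      by_contra h
      exact hk₁ (ha.2 ca hca k₁ h)
    have hk₁J : k₁ ∉ J := fun h => hJK h hk₁K
    have hδrep : b - t • a = ∑ i, (cb i - t * ca i) • α i := by
      rw [hcb, hca, Finset.smul_sum]
      simp only [sub_smul, smul_smul, Finset.sum_sub_distrib]
    have hnδrep : -(b - t • a) = ∑ i, (t * ca i - cb i) • α i := by
      rw [hδrep]
      simp only [sub_smul, Finset.sum_sub_distrib, neg_sub]
    rcases hpm _ hδΦ with hδ | hδ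
    · rcases hsplit _ hδ with hδK | hδJ
      · have := hδK.2 _ hδrep i₀ hi₀K
        have hcai₀ : ca i₀ = 0 := ha.2 ca hca i₀ hi₀K
        rw [hcai₀] at this
        simp at this
        exact hi₀ this
      · have := hδJ.2 _ hδrep k₁ hk₁J
        have hcbk₁ : cb k₁ = 0 := hb.2 cb hcb k₁ hk₁J
        rw [hcbk₁] at this
        simp at this
        rcases this with h | h
        · exact ht0 h
        · exact hk₁ h
    · rcases hsplit _ hδ with hδK | hδJ
      · have := hδK.2 _ hnδrep i₀ hi₀K
        have hcai₀ : ca i₀ = 0 := ha.2 ca hca i₀ hi₀K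
        rw [hcai₀] at this
        simp at this
        exact hi₀ this
      · have := hδJ.2 _ hnδrep k₁ hk₁J
        have hcbk₁ : cb k₁ = 0 := hb.2 cb hcb k₁ hk₁J
        rw [hcbk₁] at this
        simp at this
        rcases this with h | h
        · exact ht0 h
        · exact hk₁ h
  -- conclude via irreducibility
  by_contra hKne
  obtain ⟨k₀, hk₀⟩ := Set.nonempty_iff_ne_empty.mpr hKne
  obtain ⟨j₀, hj₀⟩ := (Set.ne_univ_iff_exists_notMem K).mp hKI
  have hαmem : ∀ (i : I) (S : Set I), i ∈ S →
      α i ∈ {β | β ∈ P ∧ ∀ c : I → ℝ, β = ∑ i, c i • α i → ∀ i ∉ S, c i = 0} := by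
    intro i S hiS
    refine ⟨hαP i, ?_⟩
    intro c hc j hjS
    have := uniq c (fun j => if j = i then 1 else 0) (by rw [← hc, ← hrepδ i])
    rw [congrFun this j, if_neg]
    rintro rfl
    exact hjS hiS
  have hαk₀ : α k₀ ∈ PK := hαmem k₀ K hk₀
  have hαj₀PK : α j₀ ∉ PK := by
    intro h
    have := h.2 (fun j => if j = j₀ then 1 else 0) (hrepδ j₀) j₀ hj₀
    simp at this
  have hαj₀ : α j₀ ∈ PJ := (hsplit (α j₀) (hαP j₀)).resolve_left hαj₀PK
  apply hirr
  refine ⟨{v | v ∈ Φ ∧ (v ∈ PK ∨ -v ∈ PK)}, {v | v ∈ Φ ∧ (v ∈ PJ ∨ -v ∈ PJ)},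
    ⟨α k₀, hα k₀, Or.inl hαk₀⟩, ⟨α j₀, hα j₀, Or.inl hαj₀⟩, ?_, ?_⟩
  · apply Set.Subset.antisymm
    · rintro v (⟨hv, _⟩ | ⟨hv, _⟩) <;> exact hv
    · intro v hv
      rcases hpm v hv with h | h
      · rcases hsplit v h with hK' | hJ'
        · exact Or.inl ⟨hv, Or.inl hK'⟩
        · exact Or.inr ⟨hv, Or.inl hJ'⟩
      · rcases hsplit _ h with hK' | hJ'
        · exact Or.inl ⟨hv, Or.inr hK'⟩
        · exact Or.inr ⟨hv, Or.inr hJ'⟩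
  · rintro a ⟨_, haK | haK⟩ b ⟨_, hbJ | hbJ⟩
    · exact hkey a haK b hbJ
    · have := hkey a haK (-b) hbJ
      rw [inner_neg_right] at this
      linarith
    · have := hkey (-a) haK b hbJ
      rw [inner_neg_left] at this
      linarith
    · have := hkey (-a) haK (-b) hbJ
      rw [inner_neg_left, inner_neg_right] at this
      linarith
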